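/- Let R be a real closed field (or more generally an ordered field) with a convex valuation ring O_R with maximal ideal M_R, and let g : O_R → O_R be a differentiable function such that g'(x) ∈ O_R for all x ∈ O_R and the residue res(g'(x)) is constant. If moreover g satisfies the Mean Value Theorem (for any x ≠ x' in O_R there exists x'' in O_R with g(x) - g(x') = g'(x'')(x - x')), then for all distinct x, x' ∈ O_R: v(g(x) - g(x') - g'(0)(x - x')) > v(x - x'), where v is the valuation associated to O_R. -/

import Mathlib

/-- Let `R` be an ordered field with a convex valuation ring `O_R`, encoded via the
associated valuation `v` (so `x ∈ O_R ↔ 0 ≤ v x` and `x ∈ M_R ↔ 0 < v x`, and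
`res (g' x)` constant means `0 < v (g' x - g' 0)`). If `g : O_R → O_R` is differentiable with
derivative `g'` taking values in `O_R`, of constant residue, and satisfying the Mean Value
Theorem on `O_R`, then for all distinct `x, x' ∈ O_R`:
`v (g x - g x' - g' 0 * (x - x')) > v (x - x')`. -/
theorem stmt2 {R : Type*} [Field R] [LinearOrder R] [IsStrictOrderedRing R]
    {Γ : Type*} [AddCommGroup Γ] [LinearOrder Γ] [IsOrderedAddMonoid Γ]
    (v : R → WithTop Γ)
    (hv0 : ∀ x : R, v x = ⊤ ↔ x = 0)
    (hvmul : ∀ x y : R, v (x * y) = v x + v y)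
    (hvadd : ∀ x y : R, min (v x) (v y) ≤ v (x + y))
    (g g' : R → R)
    (hgO : ∀ x : R, 0 ≤ v x → 0 ≤ v (g x))
    (hg'O : ∀ x : R, 0 ≤ v x → 0 ≤ v (g' x))
    (hres : ∀ x : R, 0 ≤ v x → 0 < v (g' x - g' 0))
    (hMVT : ∀ x x' : R, 0 ≤ v x → 0 ≤ v x' → x ≠ x' →
      ∃ x'' : R, 0 ≤ v x'' ∧ g x - g x' = g' x'' * (x - x')) :
    ∀ x x' : R, 0 ≤ v x → 0 ≤ v x' → x ≠ x' →
      v (x - x') < v (g x - g x' - g' 0 * (x - x')) := by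
  intro x x' hx hx' hne
  obtain ⟨x'', hx'', heq⟩ := hMVT x x' hx hx' hne
  have key : g x - g x' - g' 0 * (x - x') = (g' x'' - g' 0) * (x - x') := by
    rw [heq]; ring
  rw [key, hvmul]
  have h1 : 0 < v (g' x'' - g' 0) := hres x'' hx''
  have h2 : v (x - x') ≠ ⊤ := by
    simp only [ne_eq, hv0]; exact sub_ne_zero.mpr hne
  calc v (x - x') = 0 + v (x - x') := by rw [zero_add]
    _ < v (g' x'' - g' 0) + v (x - x') := by
        exact WithTop.add_lt_add_right h2 h1
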